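/- If the segment [v,w] intersects the affine hull of an (n−1)-dimensional polytope B, with v and w on opposite closed sides of aff(B), then conv([v,w] ∪ B) = conv({v} ∪ B') ∪ conv({w} ∪ B') where B' = conv(B ∪ ([v,w] ∩ aff(B))); in particular, the generalized bipyramid splits into two pyramids over the common base B'. -/

import Mathlib

/-- Tripod lemma: a convex set is closed under convex combinations of three points. -/
lemma tri_mem {n : ℕ} {K : Set (Fin n → ℝ)} (hK : Convex ℝ K)
    {x y z : Fin n → ℝ} (hx : x ∈ K) (hy : y ∈ K) (hz : z ∈ K)
    {a₁ a₂ a₃ : ℝ} (h1 : 0 ≤ a₁) (h2 : 0 ≤ a₂) (h3 : 0 ≤ a₃)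
    (hsum : a₁ + a₂ + a₃ = 1) : a₁ • x + a₂ • y + a₃ • z ∈ K := by
  by_cases hs : a₂ + a₃ = 0
  · have h2' : a₂ = 0 := le_antisymm (by linarith) h2
    have h3' : a₃ = 0 := le_antisymm (by linarith) h3
    have h1' : a₁ = 1 := by linarith
    simpa [h1', h2', h3'] using hx
  · have hspos : 0 < a₂ + a₃ := lt_of_le_of_ne (by linarith) (Ne.symm hs)
    have hy' : (a₂ / (a₂ + a₃)) • y + (a₃ / (a₂ + a₃)) • z ∈ K :=
      hK hy hz (div_nonneg h2 hspos.le) (div_nonneg h3 hspos.le)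
        (by field_simp)
    have := hK hx hy' h1 hspos.le (by linarith)
    convert this using 1
    rw [smul_add, smul_smul, smul_smul, mul_div_cancel₀ _ hs, mul_div_cancel₀ _ hs,
      add_assoc]

/-- Key pyramid lemma: a point of the bipyramid on the `v`-side of the hyperplane
lies in the pyramid over `v`. -/
lemma pyr_side {n : ℕ} (f : (Fin n → ℝ) →ₗ[ℝ] ℝ) (c : ℝ) (v w b : Fin n → ℝ)
    (T : Set (Fin n → ℝ)) (hb : b ∈ convexHull ℝ T)
    (hM : segment ℝ v w ∩ {x | f x = c} ⊆ T)
    (hv : f v ≤ c) (hw : c ≤ f w) (hbc : f b = c)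
    (α β γ : ℝ) (hα : 0 ≤ α) (hβ : 0 ≤ β) (hγ : 0 ≤ γ) (hsum : α + β + γ = 1)
    (hz : f (α • v + β • w + γ • b) ≤ c) :
    α • v + β • w + γ • b ∈ convexHull ℝ (insert v T) := by
  set K := convexHull ℝ (insert v T) with hKdef
  have hK : Convex ℝ K := convex_convexHull ℝ _
  have hvK : v ∈ K := subset_convexHull ℝ _ (Set.mem_insert _ _)
  have hbK : b ∈ K := convexHull_mono (Set.subset_insert _ _) hb
  have hfz : α * f v + β * f w + γ * c ≤ c := by
    simpa [map_add, map_smul, hbc, smul_eq_mul] using hz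
  -- find t with 0 ≤ t ≤ α and t * f v + β * f w = (t + β) * c
  have hgam : γ = 1 - α - β := by linarith
  have key : α * (f v - c) + β * (f w - c) ≤ 0 := by
    rw [hgam] at hfz; nlinarith [hfz]
  obtain ⟨t, ht0, htα, hteq⟩ :
      ∃ t : ℝ, 0 ≤ t ∧ t ≤ α ∧ t * f v + β * f w = (t + β) * c := by
    rcases eq_or_lt_of_le hβ with hβ0 | hβpos
    · exact ⟨0, le_refl _, hα, by rw [← hβ0]; ring⟩
    · rcases eq_or_lt_of_le hv with hvc | hvc
      · -- f v = c : then β * (f w - c) ≤ 0 forces f w = c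
        have h1 : β * (f w - c) ≤ 0 := by rw [hvc] at key; simpa using key
        have h2 : f w = c := le_antisymm (by nlinarith [h1]) hw
        exact ⟨0, le_refl _, hα, by rw [h2]; ring⟩
      · have hne : c - f v ≠ 0 := by intro h; linarith
        refine ⟨β * (f w - c) / (c - f v),
          div_nonneg (mul_nonneg hβ (by linarith)) (by linarith), ?_, ?_⟩
        · rw [div_le_iff₀ (by linarith)]
          nlinarith [key]
        · have ht : β * (f w - c) / (c - f v) * (f v - c) = -(β * (f w - c)) := by
            field_simp
            ring
          linear_combination ht
  by_cases hs : t + β = 0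
  · -- β = t = 0 : point is a combination of v and b
    have hβ0 : β = 0 := le_antisymm (by linarith) hβ
    have hαγ : α + γ = 1 := by linarith
    have := hK hvK hbK hα hγ hαγ
    simpa [hβ0] using this
  · have hspos : 0 < t + β := lt_of_le_of_ne (by linarith) (Ne.symm hs)
    set q : Fin n → ℝ := (t / (t + β)) • v + (β / (t + β)) • w with hq
    have hqseg : q ∈ segment ℝ v w :=
      ⟨t / (t + β), β / (t + β), div_nonneg ht0 hspos.le, div_nonneg hβ hspos.le,
        by field_simp, rfl⟩
    have hqc : f q = c := by
      rw [hq]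
      simp only [map_add, map_smul, smul_eq_mul]
      rw [div_mul_eq_mul_div, div_mul_eq_mul_div, ← add_div,
        div_eq_iff hs, hteq, mul_comm]
    have hqK : q ∈ K := subset_convexHull ℝ _ (Set.mem_insert_iff.2 (Or.inr (hM ⟨hqseg, hqc⟩)))
    have hcombo := tri_mem hK hvK hqK hbK (a₁ := α - t) (a₂ := t + β) (a₃ := γ)
      (by linarith) hspos.le hγ (by linarith)
    convert hcombo using 1
    rw [hq, smul_add, smul_smul, smul_smul, mul_div_cancel₀ _ hs, mul_div_cancel₀ _ hs,
      sub_smul]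
    abel

/-- A generalized bipyramid splits into two pyramids over the common base
`B' = conv(B ∪ ([v,w] ∩ aff B))`. -/
theorem stmt12 (n : ℕ) (B : Finset (Fin n → ℝ))
    (f : (Fin n → ℝ) →ₗ[ℝ] ℝ) (c : ℝ) (hf : f ≠ 0)
    (hB : ∀ x ∈ B, f x = c)
    (hBdim : Module.finrank ℝ (affineSpan ℝ (↑B : Set (Fin n → ℝ))).direction = n - 1)
    (hBaff : (affineSpan ℝ (↑B : Set (Fin n → ℝ)) : Set (Fin n → ℝ)) = {x | f x = c})
    (v w : Fin n → ℝ) (hv : f v ≤ c) (hw : c ≤ f w)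
    (hmeet : (segment ℝ v w ∩ {x | f x = c}).Nonempty) :
    convexHull ℝ (segment ℝ v w ∪ (↑B : Set (Fin n → ℝ))) =
      convexHull ℝ ({v} ∪
          convexHull ℝ ((↑B : Set (Fin n → ℝ)) ∪ (segment ℝ v w ∩ {x | f x = c}))) ∪
        convexHull ℝ ({w} ∪
          convexHull ℝ ((↑B : Set (Fin n → ℝ)) ∪ (segment ℝ v w ∩ {x | f x = c}))) := by
  set D : Set (Fin n → ℝ) := (↑B : Set (Fin n → ℝ)) with hD
  set M : Set (Fin n → ℝ) := segment ℝ v w ∩ {x | f x = c} with hMdef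
  set T : Set (Fin n → ℝ) := D ∪ M with hT
  -- B is nonempty
  have hBne : D.Nonempty := by
    rcases D.eq_empty_or_nonempty with h | h
    · exfalso
      obtain ⟨m, hm⟩ := hmeet
      have h2 : m ∈ (affineSpan ℝ D : Set (Fin n → ℝ)) := by rw [hBaff]; exact hm.2
      rw [h] at h2
      simp [AffineSubspace.span_empty] at h2
    · exact h
  -- hyperplane is convex, so hull of D lies in it
  have hplane : Convex ℝ {x : Fin n → ℝ | f x = c} :=
    convex_hyperplane (IsLinearMap.mk f.map_add f.map_smul) c
  have hhullD : ∀ x ∈ convexHull ℝ D, f x = c := fun x hx =>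
    convexHull_min (fun y hy => hB y hy) hplane hx
  -- rewrite RHS pieces
  have hRv : convexHull ℝ ({v} ∪ convexHull ℝ T) = convexHull ℝ (insert v T) := by
    rw [convexHull_convexHull_union_right, Set.singleton_union]
  have hRw : convexHull ℝ ({w} ∪ convexHull ℝ T) = convexHull ℝ (insert w T) := by
    rw [convexHull_convexHull_union_right, Set.singleton_union]
  -- rewrite LHS
  have hL : convexHull ℝ (segment ℝ v w ∪ D) = convexHull ℝ (insert v (insert w D)) := by
    rw [← convexHull_pair, convexHull_convexHull_union_left, Set.insert_union,
      Set.singleton_union]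
  rw [hRv, hRw, hL]
  apply Set.Subset.antisymm
  · -- forward inclusion
    intro z hz
    rw [convexHull_insert (Set.insert_nonempty _ _)] at hz
    obtain ⟨a, ha, y, hy, hzy⟩ := mem_convexJoin.1 hz
    rw [Set.mem_singleton_iff] at ha
    rw [ha] at hzy
    rw [convexHull_insert hBne] at hy
    obtain ⟨a', ha', u, hu, hyu⟩ := mem_convexJoin.1 hy
    rw [Set.mem_singleton_iff] at ha'
    rw [ha'] at hyu
    obtain ⟨p, p', hp, hp', hpp, rfl⟩ := hzy
    obtain ⟨q, q', hq, hq', hqq, rfl⟩ := hyu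
    have huc : f u = c := hhullD u hu
    have huT : u ∈ convexHull ℝ T := convexHull_mono Set.subset_union_left hu
    have hMT : segment ℝ v w ∩ {x | f x = c} ⊆ T := Set.subset_union_right
    set α := p with hα
    set β := p' * q with hβ
    set γ := p' * q' with hγ
    have hα0 : 0 ≤ α := hp
    have hβ0 : 0 ≤ β := mul_nonneg hp' hq
    have hγ0 : 0 ≤ γ := mul_nonneg hp' hq'
    have hsum : α + β + γ = 1 := by
      rw [hα, hβ, hγ]; nlinarith
    have hzeq : p • v + p' • (q • w + q' • u) = α • v + β • w + γ • u := by
      rw [hα, hβ, hγ, smul_add, smul_smul, smul_smul, add_assoc]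
    rw [hzeq]
    rcases le_total (f (α • v + β • w + γ • u)) c with hside | hside
    · exact Or.inl (pyr_side f c v w u T huT hMT hv hw huc α β γ hα0 hβ0 hγ0 hsum hside)
    · refine Or.inr ?_
      have hMT' : segment ℝ w v ∩ {x | (-f) x = -c} ⊆ T := by
        rw [segment_symm]
        intro x hx
        exact hMT ⟨hx.1, by have := hx.2; simpa using neg_inj.1 this⟩
      have key := pyr_side (-f) (-c) w v u T huT hMT' (by simpa using hw)
        (by simpa using hv) (by simp [huc]) β α γ hβ0 hα0 hγ0 (by linarith)
        (by simp only [LinearMap.neg_apply, neg_le_neg_iff]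
            have : β • w + α • v + γ • u = α • v + β • w + γ • u := by abel
            rw [this]; exact hside)
      have : β • w + α • v + γ • u = α • v + β • w + γ • u := by abel
      rwa [this] at key
  · -- reverse inclusion
    have hseg : segment ℝ v w ⊆ convexHull ℝ (insert v (insert w D)) := by
      rw [← convexHull_pair]
      apply convexHull_mono
      intro x hx
      rcases hx with rfl | hx
      · exact Set.mem_insert _ _
      · exact Set.mem_insert_iff.2 (Or.inr (by simpa using Or.inl hx))
    have hTsub : T ⊆ convexHull ℝ (insert v (insert w D)) := by
      rintro x (hx | hx)
      · exact subset_convexHull ℝ _ (Set.mem_insert_iff.2 (Or.inr (Set.mem_insert_iff.2 (Or.inr hx))))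
      · exact hseg hx.1
    apply Set.union_subset
    · apply convexHull_min _ (convex_convexHull ℝ _)
      rintro x (rfl | hx)
      · exact subset_convexHull ℝ _ (Set.mem_insert _ _)
      · exact hTsub hx
    · apply convexHull_min _ (convex_convexHull ℝ _)
      rintro x (rfl | hx)
      · exact subset_convexHull ℝ _ (Set.mem_insert_iff.2 (Or.inr (Set.mem_insert _ _)))
      · exact hTsub hx
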